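/- The Schmidt-basis representation minimizes measurement entropy: if |ψ⟩ = ∑_i √λ_i |i⟩_A ⊗ |i⟩_B is in Schmidt form, then H_meas(|ψ⟩) = H_sh(λ) ≤ H_meas((U_A ⊗ U_B)|ψ⟩) for all unitaries U_A, U_B. -/

import Mathlib

open scoped BigOperators

section AuxEntropy

lemma negMulLog_sum_le' {β : Type*} (s : Finset β) (f : β → ℝ) (hf : ∀ b ∈ s, 0 ≤ f b) :
    Real.negMulLog (∑ b ∈ s, f b) ≤ ∑ b ∈ s, Real.negMulLog (f b) := by
  have key : ∀ b ∈ s, -(f b * Real.log (∑ b ∈ s, f b)) ≤ Real.negMulLog (f b) := by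
    intro b hb
    rw [Real.negMulLog, neg_mul]
    apply neg_le_neg
    rcases eq_or_lt_of_le (hf b hb) with h | h
    · simp [← h]
    · exact mul_le_mul_of_nonneg_left
        (Real.log_le_log h (Finset.single_le_sum hf hb)) h.le
  calc Real.negMulLog (∑ b ∈ s, f b)
      = ∑ b ∈ s, -(f b * Real.log (∑ b ∈ s, f b)) := by
        rw [Real.negMulLog, neg_mul, Finset.sum_mul]
        simp
    _ ≤ ∑ b ∈ s, Real.negMulLog (f b) := Finset.sum_le_sum key

lemma negMulLog_le_aux (x q : ℝ) (hx : 0 ≤ x) (hq : 0 < q) :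
    Real.negMulLog x ≤ -(x * Real.log q) + (q - x) := by
  rcases eq_or_lt_of_le hx with h | h
  · simp [← h, Real.negMulLog, hq.le]
  · have h1 : Real.log (q / x) ≤ q / x - 1 := Real.log_le_sub_one_of_pos (by positivity)
    rw [Real.log_div hq.ne' h.ne'] at h1
    have h2 : x * (q / x) = q := by field_simp
    have h3 := mul_le_mul_of_nonneg_left h1 h.le
    rw [Real.negMulLog, neg_mul]
    nlinarith

lemma sum_mul_negMulLog_le {β : Type*} (s : Finset β) (w x : β → ℝ)
    (hw : ∀ b ∈ s, 0 ≤ w b) (hx : ∀ b ∈ s, 0 ≤ x b) (hw1 : ∑ b ∈ s, w b ≤ 1) :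
    ∑ b ∈ s, w b * Real.negMulLog (x b) ≤ Real.negMulLog (∑ b ∈ s, w b * x b) := by
  set q := ∑ b ∈ s, w b * x b with hqdef
  have hq0 : 0 ≤ q := Finset.sum_nonneg fun b hb => mul_nonneg (hw b hb) (hx b hb)
  rcases eq_or_lt_of_le hq0 with h | h
  · rw [← h]
    have hz : ∀ b ∈ s, w b * x b = 0 := by
      intro b hb
      have := (Finset.sum_eq_zero_iff_of_nonneg
        (fun b hb => mul_nonneg (hw b hb) (hx b hb))).1 h.symm
      exact this b hb
    rw [Finset.sum_eq_zero]
    · simp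
    · intro b hb
      rcases mul_eq_zero.1 (hz b hb) with h0 | h0 <;> simp [h0]
  · calc ∑ b ∈ s, w b * Real.negMulLog (x b)
        ≤ ∑ b ∈ s, w b * (-(x b * Real.log q) + (q - x b)) := by
          refine Finset.sum_le_sum fun b hb => mul_le_mul_of_nonneg_left ?_ (hw b hb)
          exact negMulLog_le_aux (x b) q (hx b hb) h
      _ = -(q * Real.log q) + ((∑ b ∈ s, w b) * q - q) := by
          have e : ∀ b, w b * (-(x b * Real.log q) + (q - x b)) =
              -((w b * x b) * Real.log q) + (w b * q - w b * x b) := fun b => by ring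
          simp only [e]
          rw [Finset.sum_add_distrib, Finset.sum_sub_distrib, Finset.sum_neg_distrib,
            ← Finset.sum_mul, ← Finset.sum_mul, ← hqdef]
      _ ≤ -(q * Real.log q) := by nlinarith
      _ = Real.negMulLog q := by rw [Real.negMulLog, neg_mul]

lemma diag_sum {M : Type*} [AddCommMonoid M] {dA dB : ℕ} (f : Fin dA → Fin dB → M) :
    (∑ a : Fin dA, ∑ b : Fin dB, if (a : ℕ) = (b : ℕ) then f a b else 0)
      = ∑ i ∈ Finset.range (min dA dB),
          (if h : i < dA ∧ i < dB then f ⟨i, h.1⟩ ⟨i, h.2⟩ else 0) := by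
  set g : ℕ → M := fun i => if h : i < dA ∧ i < dB then f ⟨i, h.1⟩ ⟨i, h.2⟩ else 0 with hg
  have inner : ∀ a : Fin dA,
      (∑ b : Fin dB, if (a : ℕ) = (b : ℕ) then f a b else 0) = g a := by
    intro a
    by_cases h : (a : ℕ) < dB
    · have hcond : ∀ b : Fin dB, ((a : ℕ) = (b : ℕ)) ↔ (b = ⟨a, h⟩) := by
        intro b; rw [Fin.ext_iff]; constructor <;> intro hh <;> simp [hh] at *
      rw [Finset.sum_congr rfl (fun b _ => by rw [if_congr (hcond b) rfl rfl])]
      rw [Finset.sum_ite_eq' Finset.univ]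
      simp [hg, h, a.isLt]
    · rw [Finset.sum_eq_zero, hg]
      · simp only
        rw [dif_neg (by omega)]
      · intro b _
        rw [if_neg (by have := b.isLt; omega)]
  rw [Finset.sum_congr rfl (fun a _ => inner a), Fin.sum_univ_eq_sum_range g dA]
  refine (Finset.sum_subset (Finset.range_subset_range.2 (Nat.min_le_left _ _)) ?_).symm
  intro x hx hnx
  simp only [Finset.mem_range] at hx hnx
  rw [hg]; simp only
  rw [dif_neg (by omega)]

lemma unitary_row_sum {d : ℕ} (U : Matrix (Fin d) (Fin d) ℂ)
    (hU : U ∈ Matrix.unitaryGroup (Fin d) ℂ) (a : Fin d) :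
    ∑ c : Fin d, Complex.normSq (U a c) = 1 := by
  have h := congrFun (congrFun (Matrix.mem_unitaryGroup_iff.1 hU) a) a
  rw [Matrix.mul_apply, Matrix.one_apply_eq] at h
  have h2 : (↑(∑ c : Fin d, Complex.normSq (U a c)) : ℂ) = 1 := by
    push_cast
    rw [← h]
    refine Finset.sum_congr rfl fun c _ => ?_
    rw [Matrix.star_apply, ← Complex.mul_conj]
    rfl
  exact_mod_cast h2

lemma unitary_col_sum {d : ℕ} (U : Matrix (Fin d) (Fin d) ℂ)
    (hU : U ∈ Matrix.unitaryGroup (Fin d) ℂ) (c : Fin d) :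
    ∑ a : Fin d, Complex.normSq (U a c) = 1 := by
  have h := congrFun (congrFun (Matrix.mem_unitaryGroup_iff'.1 hU) c) c
  rw [Matrix.mul_apply, Matrix.one_apply_eq] at h
  have h2 : (↑(∑ a : Fin d, Complex.normSq (U a c)) : ℂ) = 1 := by
    push_cast
    rw [← h]
    refine Finset.sum_congr rfl fun b _ => ?_
    rw [Matrix.star_apply]
    rw [show star (U b c) = starRingEnd ℂ (U b c) from rfl, mul_comm, Complex.mul_conj]
  exact_mod_cast h2

lemma unitary_orth {d : ℕ} (U : Matrix (Fin d) (Fin d) ℂ)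
    (hU : U ∈ Matrix.unitaryGroup (Fin d) ℂ) (i j : Fin d) :
    ∑ b : Fin d, U b i * starRingEnd ℂ (U b j) = if i = j then 1 else 0 := by
  have h := congrFun (congrFun (Matrix.mem_unitaryGroup_iff'.1 hU) j) i
  rw [Matrix.mul_apply, Matrix.one_apply] at h
  rw [show (if i = j then (1:ℂ) else 0) = if j = i then 1 else 0 by simp [eq_comm], ← h]
  refine Finset.sum_congr rfl fun b _ => ?_
  rw [Matrix.star_apply, mul_comm]
  rfl

lemma marginal_sum {dB m : ℕ} (lam : ℕ → ℝ) (hlam : ∀ i, 0 ≤ lam i)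
    (f : Fin dB → ℂ) (cA : ℕ → ℂ) (cB : Fin dB → ℕ → ℂ)
    (hf : ∀ b, f b = ∑ i ∈ Finset.range m, cA i * cB b i * (Real.sqrt (lam i) : ℂ))
    (orth : ∀ i ∈ Finset.range m, ∀ j ∈ Finset.range m,
      (∑ b : Fin dB, cB b i * starRingEnd ℂ (cB b j)) = if i = j then 1 else 0) :
    ∑ b : Fin dB, Complex.normSq (f b)
      = ∑ i ∈ Finset.range m, Complex.normSq (cA i) * lam i := by
  have hC : ((∑ b : Fin dB, Complex.normSq (f b) : ℝ) : ℂ)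
      = ((∑ i ∈ Finset.range m, Complex.normSq (cA i) * lam i : ℝ) : ℂ) := by
    push_cast
    calc (∑ b : Fin dB, (Complex.normSq (f b) : ℂ))
        = ∑ b : Fin dB, f b * starRingEnd ℂ (f b) := by
          refine Finset.sum_congr rfl fun b _ => (Complex.mul_conj _).symm
      _ = ∑ b : Fin dB, ∑ i ∈ Finset.range m, ∑ j ∈ Finset.range m,
            (cA i * starRingEnd ℂ (cA j) * (Real.sqrt (lam i) : ℂ) * (Real.sqrt (lam j) : ℂ))
              * (cB b i * starRingEnd ℂ (cB b j)) := by
          refine Finset.sum_congr rfl fun b _ => ?_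
          rw [hf b, map_sum, Finset.sum_mul_sum]
          refine Finset.sum_congr rfl fun i _ => Finset.sum_congr rfl fun j _ => ?_
          simp only [map_mul, Complex.conj_ofReal]
          ring
      _ = ∑ i ∈ Finset.range m, ∑ j ∈ Finset.range m,
            (cA i * starRingEnd ℂ (cA j) * (Real.sqrt (lam i) : ℂ) * (Real.sqrt (lam j) : ℂ))
              * ∑ b : Fin dB, (cB b i * starRingEnd ℂ (cB b j)) := by
          rw [Finset.sum_comm]
          refine Finset.sum_congr rfl fun i _ => ?_
          rw [Finset.sum_comm]
          refine Finset.sum_congr rfl fun j _ => ?_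
          rw [Finset.mul_sum]
      _ = ∑ i ∈ Finset.range m, (Complex.normSq (cA i) : ℂ) * (lam i : ℂ) := by
          refine Finset.sum_congr rfl fun i hi => ?_
          rw [Finset.sum_congr rfl (fun j hj => by rw [orth i hi j hj])]
          simp only [mul_ite, mul_one, mul_zero]
          rw [Finset.sum_ite_eq (Finset.range m) i, if_pos hi, Complex.mul_conj]
          have hs : (Real.sqrt (lam i) : ℂ) * (Real.sqrt (lam i) : ℂ) = (lam i : ℂ) := by
            rw [← Complex.ofReal_mul, Real.mul_self_sqrt (hlam i)]
          rw [mul_assoc, hs]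
  exact_mod_cast hC

end AuxEntropy

/-- Application of `U_A ⊗ U_B` to a bipartite state. -/
noncomputable def apply2 {dA dB : ℕ} (UA : Matrix (Fin dA) (Fin dA) ℂ)
    (UB : Matrix (Fin dB) (Fin dB) ℂ) (ψ : Fin dA × Fin dB → ℂ) :
    Fin dA × Fin dB → ℂ :=
  fun x => ∑ a, ∑ b, UA x.1 a * UB x.2 b * ψ (a, b)

/-- Measurement entropy of a bipartite pure state. -/
noncomputable def Hmeas2 {dA dB : ℕ} (ψ : Fin dA × Fin dB → ℂ) : ℝ :=
  ∑ x, Real.negMulLog (‖ψ x‖ ^ 2)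

/-- `E_Hmin` for bipartite states. -/
noncomputable def EHmin2 {dA dB : ℕ} (ψ : Fin dA × Fin dB → ℂ) : ℝ :=
  ⨅ U : Matrix.unitaryGroup (Fin dA) ℂ × Matrix.unitaryGroup (Fin dB) ℂ,
    Hmeas2 (apply2 (U.1 : Matrix (Fin dA) (Fin dA) ℂ) (U.2 : Matrix (Fin dB) (Fin dB) ℂ) ψ)

lemma Hmeas2_eq {dA dB : ℕ} (φ : Fin dA × Fin dB → ℂ) :
    Hmeas2 φ = ∑ a : Fin dA, ∑ b : Fin dB, Real.negMulLog (Complex.normSq (φ (a, b))) := by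
  rw [Hmeas2, Fintype.sum_prod_type]
  refine Finset.sum_congr rfl fun a _ => Finset.sum_congr rfl fun b _ => ?_
  rw [Complex.sq_norm]

/-- The Schmidt-basis representation minimizes measurement entropy: if
`|ψ⟩ = ∑_i √λ_i |i⟩_A ⊗ |i⟩_B` is in Schmidt form, then
`H_meas(ψ) = H_sh(λ) ≤ H_meas((U_A ⊗ U_B)ψ)` for all unitaries `U_A`, `U_B`. -/
theorem schmidt_minimizes_Hmeas (dA dB : ℕ) (lam : ℕ → ℝ) (hlam : ∀ i, 0 ≤ lam i)
    (hsum : ∑ i ∈ Finset.range (min dA dB), lam i = 1)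
    (ψ : Fin dA × Fin dB → ℂ)
    (hψ : ∀ a b, ψ (a, b) =
      if (a : ℕ) = (b : ℕ) then ((Real.sqrt (lam a) : ℝ) : ℂ) else 0) :
    Hmeas2 ψ = ∑ i ∈ Finset.range (min dA dB), Real.negMulLog (lam i) ∧
      ∀ UA ∈ Matrix.unitaryGroup (Fin dA) ℂ, ∀ UB ∈ Matrix.unitaryGroup (Fin dB) ℂ,
        Hmeas2 ψ ≤ Hmeas2 (apply2 UA UB ψ) := by
  have hH : Hmeas2 ψ = ∑ i ∈ Finset.range (min dA dB), Real.negMulLog (lam i) := by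
    have hn : ∀ (a : Fin dA) (b : Fin dB),
        Real.negMulLog (Complex.normSq (ψ (a, b)))
          = (if (a : ℕ) = (b : ℕ) then Real.negMulLog (lam a) else 0) := by
      intro a b
      rw [hψ]
      split
      · rw [Complex.normSq_ofReal, Real.mul_self_sqrt (hlam _)]
      · simp
    rw [Hmeas2_eq]
    simp only [hn]
    rw [diag_sum (fun a b => Real.negMulLog (lam a))]
    refine Finset.sum_congr rfl fun i hi => ?_
    simp only [Finset.mem_range] at hi
    rw [dif_pos ⟨lt_of_lt_of_le hi (Nat.min_le_left _ _),
      lt_of_lt_of_le hi (Nat.min_le_right _ _)⟩]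
  refine ⟨hH, ?_⟩
  intro UA hUA UB hUB
  rw [hH]
  set m := min dA dB with hm
  set cA : Fin dA → ℕ → ℂ := fun a i => if h : i < dA then UA a ⟨i, h⟩ else 0 with hcA
  set cB : Fin dB → ℕ → ℂ := fun b i => if h : i < dB then UB b ⟨i, h⟩ else 0 with hcB
  -- Schmidt form of the rotated state
  have hψ' : ∀ (a : Fin dA) (b : Fin dB), apply2 UA UB ψ (a, b)
      = ∑ i ∈ Finset.range m, cA a i * cB b i * (Real.sqrt (lam i) : ℂ) := by
    intro a b
    show (∑ c, ∑ d, UA a c * UB b d * ψ (c, d)) = _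
    simp only [hψ, mul_ite, mul_zero]
    rw [diag_sum (fun c d => UA a c * UB b d * ((Real.sqrt (lam c) : ℝ) : ℂ))]
    refine Finset.sum_congr rfl fun i hi => ?_
    simp only [Finset.mem_range] at hi
    have h1 : i < dA := lt_of_lt_of_le hi (Nat.min_le_left _ _)
    have h2 : i < dB := lt_of_lt_of_le hi (Nat.min_le_right _ _)
    rw [dif_pos ⟨h1, h2⟩, hcA, hcB]
    simp only [dif_pos h1, dif_pos h2]
  -- orthogonality for columns of UB
  have orth : ∀ (b : Fin dB), True := fun _ => trivial
  have orthB : ∀ i ∈ Finset.range m, ∀ j ∈ Finset.range m,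
      (∑ b : Fin dB, cB b i * starRingEnd ℂ (cB b j)) = if i = j then 1 else 0 := by
    intro i hi j hj
    simp only [Finset.mem_range] at hi hj
    have h1 : i < dB := lt_of_lt_of_le hi (Nat.min_le_right _ _)
    have h2 : j < dB := lt_of_lt_of_le hj (Nat.min_le_right _ _)
    have := unitary_orth UB hUB ⟨i, h1⟩ ⟨j, h2⟩
    rw [hcB]
    simp only [dif_pos h1, dif_pos h2]
    rw [this]
    simp [Fin.mk.injEq]
  -- the marginal distribution on A
  have key : ∀ a : Fin dA, ∑ b : Fin dB, Complex.normSq (apply2 UA UB ψ (a, b))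
      = ∑ i ∈ Finset.range m, Complex.normSq (cA a i) * lam i := by
    intro a
    exact marginal_sum lam hlam _ (cA a) cB (fun b => hψ' a b) orthB
  -- column sums of |UA|² are 1
  have hcolsum : ∀ i ∈ Finset.range m, ∑ a : Fin dA, Complex.normSq (cA a i) = 1 := by
    intro i hi
    simp only [Finset.mem_range] at hi
    have h1 : i < dA := lt_of_lt_of_le hi (Nat.min_le_left _ _)
    have := unitary_col_sum UA hUA ⟨i, h1⟩
    rw [← this]
    refine Finset.sum_congr rfl fun a _ => ?_
    rw [hcA]; simp only [dif_pos h1]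
  -- row sums of |UA|² over range m are ≤ 1
  have hrowsum : ∀ a : Fin dA, ∑ i ∈ Finset.range m, Complex.normSq (cA a i) ≤ 1 := by
    intro a
    have h1 : ∑ i ∈ Finset.range m, Complex.normSq (cA a i)
        ≤ ∑ i ∈ Finset.range dA, Complex.normSq (cA a i) :=
      Finset.sum_le_sum_of_subset_of_nonneg
        (Finset.range_subset_range.2 (Nat.min_le_left _ _))
        (fun i _ _ => Complex.normSq_nonneg _)
    have h2 : ∑ i ∈ Finset.range dA, Complex.normSq (cA a i)
        = ∑ c : Fin dA, Complex.normSq (UA a c) := by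
      rw [← Fin.sum_univ_eq_sum_range (fun i => Complex.normSq (cA a i)) dA]
      refine Finset.sum_congr rfl fun c _ => ?_
      rw [hcA]; simp only [dif_pos c.isLt, Fin.eta]
    rw [h2, unitary_row_sum UA hUA a] at h1
    exact h1
  calc ∑ i ∈ Finset.range m, Real.negMulLog (lam i)
      = ∑ i ∈ Finset.range m,
          (∑ a : Fin dA, Complex.normSq (cA a i)) * Real.negMulLog (lam i) := by
        refine Finset.sum_congr rfl fun i hi => ?_
        rw [hcolsum i hi, one_mul]
    _ = ∑ a : Fin dA, ∑ i ∈ Finset.range m,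
          Complex.normSq (cA a i) * Real.negMulLog (lam i) := by
        rw [← Finset.sum_comm]
        refine Finset.sum_congr rfl fun i _ => ?_
        rw [Finset.sum_mul]
    _ ≤ ∑ a : Fin dA,
          Real.negMulLog (∑ i ∈ Finset.range m, Complex.normSq (cA a i) * lam i) := by
        refine Finset.sum_le_sum fun a _ => ?_
        exact sum_mul_negMulLog_le _ _ _
          (fun i _ => Complex.normSq_nonneg _) (fun i _ => hlam i) (hrowsum a)
    _ = ∑ a : Fin dA,
          Real.negMulLog (∑ b : Fin dB, Complex.normSq (apply2 UA UB ψ (a, b))) := by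
        refine Finset.sum_congr rfl fun a _ => ?_
        rw [key a]
    _ ≤ ∑ a : Fin dA, ∑ b : Fin dB,
          Real.negMulLog (Complex.normSq (apply2 UA UB ψ (a, b))) := by
        refine Finset.sum_le_sum fun a _ => ?_
        exact negMulLog_sum_le' Finset.univ _ (fun b _ => Complex.normSq_nonneg _)
    _ = Hmeas2 (apply2 UA UB ψ) := (Hmeas2_eq _).symm
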